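/- Let ψ and φ be unit vectors in H_A ⊗ H_B where ψ has Schmidt rank at most N' and φ has Schmidt coefficients λ_0 ≥ λ_1 ≥ ⋯ with at least N nonzero coefficients, N > N'. Then ‖ψ − φ‖² ≥ ∑_{i ≥ N'} λ_i². -/

import Mathlib

local notation "⟪" x ", " y "⟫" => @inner ℂ _ _ x y

lemma besselAux {E : Type*} [NormedAddCommGroup E] [InnerProductSpace ℂ E] [FiniteDimensional ℂ E]
    {ι : Type*} [Fintype ι] (v : ι → E) (hv : Orthonormal ℂ v) (W : Submodule ℂ E) :
    ∑ i, ‖(W.orthogonalProjectionOnto (v i) : E)‖ ^ 2 ≤ (Module.finrank ℂ W : ℝ) := by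
  have b := stdOrthonormalBasis ℂ W
  have hnorm : ∀ x : E, ‖(W.orthogonalProjectionOnto x : E)‖ ^ 2
      = ∑ k, ‖⟪(b k : E), x⟫‖ ^ 2 := by
    intro x
    have h1 : ‖(W.orthogonalProjectionOnto x : E)‖ = ‖b.repr (W.orthogonalProjectionOnto x)‖ := by
      rw [b.repr.norm_map, Submodule.norm_coe]
    rw [h1, EuclideanSpace.norm_eq, Real.sq_sqrt (by positivity)]
    congr 1; ext k
    rw [b.repr_apply_apply, Submodule.inner_orthogonalProjectionOnto_eq_of_mem_left]
  calc ∑ i, ‖(W.orthogonalProjectionOnto (v i) : E)‖ ^ 2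
      = ∑ i, ∑ k, ‖⟪(b k : E), v i⟫‖ ^ 2 := by simp_rw [hnorm]
    _ = ∑ k, ∑ i, ‖⟪v i, (b k : E)⟫‖ ^ 2 := by
        rw [Finset.sum_comm]; simp_rw [norm_inner_symm]
    _ ≤ ∑ k : Fin (Module.finrank ℂ W), (1:ℝ) := by
        apply Finset.sum_le_sum; intro k _
        have h2 := hv.sum_inner_products_le (s := Finset.univ) ((b k : E))
        have h3 : ‖(b k : E)‖ = 1 := by
          rw [Submodule.norm_coe]; exact b.orthonormal.1 k
        rw [h3] at h2; simpa using h2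
    _ = (Module.finrank ℂ W : ℝ) := by simp

lemma combAux (N N' : ℕ) (hNN' : N' < N) (lam : Fin N → ℝ) (hpos : ∀ i, 0 ≤ lam i)
    (hmono : ∀ i j : Fin N, i ≤ j → lam j ≤ lam i) (c : Fin N → ℝ)
    (hc0 : ∀ i, 0 ≤ c i) (hc1 : ∀ i, c i ≤ 1) (hcsum : ∑ i, c i ≤ (N' : ℝ)) :
    ∑ i, lam i ^ 2 * c i ≤ ∑ i ∈ Finset.univ.filter (fun i : Fin N => (i : ℕ) < N'), lam i ^ 2 := by
  classical
  set i0 : Fin N := ⟨N', hNN'⟩ with hi0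
  set t : ℝ := lam i0 ^ 2 with ht
  set S1 := Finset.univ.filter (fun i : Fin N => (i : ℕ) < N') with hS1
  set S2 := Finset.univ.filter (fun i : Fin N => ¬ (i : ℕ) < N') with hS2
  have hsplit : ∀ f : Fin N → ℝ, ∑ i, f i = ∑ i ∈ S1, f i + ∑ i ∈ S2, f i := by
    intro f; rw [hS1, hS2]; exact (Finset.sum_filter_add_sum_filter_not _ _ f).symm
  have hcard : S1.card = N' := by
    have : S1 = Finset.Iio i0 := by
      ext i; simp [hS1, Finset.mem_Iio, Fin.lt_def, hi0]
    rw [this, Fin.card_Iio]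
  have ht0 : 0 ≤ t := sq_nonneg _
  have hS2le : ∀ i ∈ S2, lam i ^ 2 ≤ t := by
    intro i hi
    rw [hS2, Finset.mem_filter] at hi
    have : i0 ≤ i := by simpa [Fin.le_def, hi0] using Nat.le_of_not_lt hi.2
    exact pow_le_pow_left₀ (hpos i) (hmono i0 i this) 2
  have hS1ge : ∀ i ∈ S1, t ≤ lam i ^ 2 := by
    intro i hi
    rw [hS1, Finset.mem_filter] at hi
    have : i ≤ i0 := by simp [Fin.le_def, hi0]; omega
    exact pow_le_pow_left₀ (hpos i0) (hmono i i0 this) 2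
  have key : ∑ i, lam i ^ 2 * c i ≤ ∑ i ∈ S1, lam i ^ 2 * c i + t * ∑ i ∈ S2, c i := by
    rw [hsplit (fun i => lam i ^ 2 * c i), Finset.mul_sum]
    exact add_le_add le_rfl (Finset.sum_le_sum fun i hi =>
      mul_le_mul_of_nonneg_right (hS2le i hi) (hc0 i))
  have hc2 : ∑ i ∈ S2, c i ≤ ∑ i ∈ S1, (1 - c i) := by
    have h1 : ∑ i ∈ S1, c i + ∑ i ∈ S2, c i ≤ (N' : ℝ) := by rw [← hsplit]; exact hcsum
    have h2 : ∑ i ∈ S1, (1 - c i) = (N' : ℝ) - ∑ i ∈ S1, c i := by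
      rw [Finset.sum_sub_distrib, Finset.sum_const, hcard]; simp
    linarith
  calc ∑ i, lam i ^ 2 * c i ≤ ∑ i ∈ S1, lam i ^ 2 * c i + t * ∑ i ∈ S2, c i := key
    _ ≤ ∑ i ∈ S1, lam i ^ 2 * c i + t * ∑ i ∈ S1, (1 - c i) := by
        gcongr
    _ = ∑ i ∈ S1, (lam i ^ 2 * c i + t * (1 - c i)) := by
        rw [Finset.mul_sum, ← Finset.sum_add_distrib]
    _ ≤ ∑ i ∈ S1, lam i ^ 2 := by
        apply Finset.sum_le_sum; intro i hi
        have h1 := hS1ge i hi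
        have h2 := hc1 i
        have h3 := hc0 i
        nlinarith

/-- elementary tensor in `ℂ^{m×n}` -/
noncomputable def tens {m n : ℕ} (x : EuclideanSpace ℂ (Fin m)) (y : EuclideanSpace ℂ (Fin n)) :
    EuclideanSpace ℂ (Fin m × Fin n) :=
  WithLp.toLp 2 (fun p : Fin m × Fin n => x p.1 * y p.2)

lemma tens_inner {m n : ℕ} (x₁ x₂ : EuclideanSpace ℂ (Fin m)) (y₁ y₂ : EuclideanSpace ℂ (Fin n)) :
    ⟪tens x₁ y₁, tens x₂ y₂⟫ = ⟪x₁, x₂⟫ * ⟪y₁, y₂⟫ := by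
  simp only [PiLp.inner_apply, RCLike.inner_apply, tens, PiLp.toLp_apply, Finset.sum_mul_sum,
    Fintype.sum_prod_type]
  apply Finset.sum_congr rfl; intro a _
  apply Finset.sum_congr rfl; intro b _
  simp only [map_mul]; ring

lemma sum_tensor_apply {m n N : ℕ} (c : Fin N → ℂ) (u : Fin N → EuclideanSpace ℂ (Fin m))
    (w : Fin N → EuclideanSpace ℂ (Fin n)) (p : Fin m × Fin n) :
    (∑ i, c i • tens (u i) (w i)) p = ∑ i, c i * u i p.1 * w i p.2 := by
  induction (Finset.univ : Finset (Fin N)) using Finset.induction with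
  | empty => rfl
  | insert _ _ h ih =>
      rw [Finset.sum_insert h, Finset.sum_insert h, PiLp.add_apply, PiLp.smul_apply, ih]
      simp [tens, mul_assoc]

lemma inner_sum_tensor {m n N : ℕ} (c : Fin N → ℂ) (u : Fin N → EuclideanSpace ℂ (Fin m))
    (hu : Orthonormal ℂ u) (w x : Fin N → EuclideanSpace ℂ (Fin n)) :
    ⟪∑ i, c i • tens (u i) (w i), ∑ j, c j • tens (u j) (x j)⟫
      = ∑ i, (starRingEnd ℂ) (c i) * c i * ⟪w i, x i⟫ := by
  rw [sum_inner]
  simp_rw [inner_sum, inner_smul_left, inner_smul_right, tens_inner]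
  have h := orthonormal_iff_ite.mp hu
  simp_rw [h]
  simp only [mul_ite, ite_mul, one_mul, zero_mul, mul_zero, mul_one]
  simp [Finset.sum_ite_eq, mul_assoc]

lemma sum_smul_apply {n N : ℕ} (c : Fin N → ℂ) (w : Fin N → EuclideanSpace ℂ (Fin n)) (b : Fin n) :
    (∑ i, c i • w i) b = ∑ i, c i * w i b := by
  induction (Finset.univ : Finset (Fin N)) using Finset.induction with
  | empty => rfl
  | insert _ _ h ih =>
      rw [Finset.sum_insert h, Finset.sum_insert h, PiLp.add_apply, PiLp.smul_apply, ih]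
      simp

/-- If `ψ` has Schmidt rank at most `N'` and `φ = ∑_{i<N} λ_i u_i⊗v_i` with `λ` positive and
nonincreasing (at least `N > N'` nonzero Schmidt coefficients), then
`‖ψ − φ‖² ≥ ∑_{i ≥ N'} λ_i²`. Bipartite vectors are modelled as elements of
`ℂ^m ⊗ ℂ^n ≅ ℂ^{m×n}`, and the Schmidt rank is the rank of the corresponding matrix. -/
theorem stmt4 {m n : ℕ} (N N' : ℕ) (hNN' : N' < N)
    (ψ φ : EuclideanSpace ℂ (Fin m × Fin n))
    (hψ : ‖ψ‖ = 1) (hφ : ‖φ‖ = 1)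
    (hrank : (Matrix.of fun a b => ψ (a, b)).rank ≤ N')
    (lam : Fin N → ℝ) (hpos : ∀ i, 0 < lam i)
    (hmono : ∀ i j : Fin N, i ≤ j → lam j ≤ lam i)
    (u : Fin N → EuclideanSpace ℂ (Fin m)) (hu : Orthonormal ℂ u)
    (v : Fin N → EuclideanSpace ℂ (Fin n)) (hv : Orthonormal ℂ v)
    (hφdef : ∀ p : Fin m × Fin n, φ p = ∑ i, (lam i : ℂ) * u i p.1 * v i p.2) :
    ∑ i ∈ Finset.univ.filter (fun i : Fin N => N' ≤ (i : ℕ)), lam i ^ 2 ≤ ‖ψ - φ‖ ^ 2 := by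
  classical
  set A : Matrix (Fin m) (Fin n) ℂ := Matrix.of fun a b => ψ (a, b) with hA
  set e : (Fin n → ℂ) ≃ₗ[ℂ] EuclideanSpace ℂ (Fin n) :=
    (WithLp.linearEquiv 2 ℂ (Fin n → ℂ)).symm with he
  set r : Fin m → EuclideanSpace ℂ (Fin n) := fun a => e (A a) with hr
  set W : Submodule ℂ (EuclideanSpace ℂ (Fin n)) := Submodule.span ℂ (Set.range r) with hW
  have hdim : Module.finrank ℂ W ≤ N' := by
    have h2 : W = (Submodule.span ℂ (Set.range A)).map e.toLinearMap := by
      rw [hW, Submodule.map_span]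
      congr 1
      exact Set.range_comp (⇑(e : (Fin n → ℂ) →ₗ[ℂ] EuclideanSpace ℂ (Fin n))) A
    rw [h2, LinearEquiv.finrank_map_eq]
    rw [A.rank_eq_finrank_span_row] at hrank
    exact hrank
  set Pv : Fin N → EuclideanSpace ℂ (Fin n) :=
    fun i => (W.orthogonalProjectionOnto (v i) : EuclideanSpace ℂ (Fin n)) with hPv
  set c : Fin N → ℂ := fun i => (lam i : ℂ) with hc
  -- φ as a sum of tensors
  have hφsum : φ = ∑ i, c i • tens (u i) (v i) := by
    refine (WithLp.equiv 2 _).injective (funext fun p => ?_)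
    show φ p = (∑ i, c i • tens (u i) (v i)) p
    rw [sum_tensor_apply, hφdef]
  set χ : EuclideanSpace ℂ (Fin m × Fin n) := ∑ i, c i • tens (u i) (Pv i) with hχ
  -- norms
  have hvnorm : ∀ i, ⟪v i, v i⟫ = 1 := by
    intro i
    rw [inner_self_eq_norm_sq_to_K, hv.1 i]
    norm_num
  have hsum1 : ∑ i, lam i ^ 2 = 1 := by
    have h := inner_sum_tensor c u hu v v
    rw [← hφsum] at h
    have h1 : ⟪φ, φ⟫ = (1 : ℂ) := by
      rw [inner_self_eq_norm_sq_to_K, hφ]; simp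
    rw [h1] at h
    simp only [hc, hvnorm, mul_one, Complex.conj_ofReal] at h
    have h2 : (1 : ℂ) = ((∑ i, lam i ^ 2 : ℝ) : ℂ) := by
      rw [h]; push_cast; exact Finset.sum_congr rfl fun i _ => (sq (lam i : ℂ)).symm
    exact_mod_cast h2.symm
  have hχnorm : ‖χ‖ ^ 2 = ∑ i, lam i ^ 2 * ‖Pv i‖ ^ 2 := by
    have h := inner_sum_tensor c u hu Pv Pv
    rw [← hχ, inner_self_eq_norm_sq_to_K] at h
    simp only [hc, Complex.conj_ofReal, inner_self_eq_norm_sq_to_K] at h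
    rw [show ((RCLike.ofReal : ℝ → ℂ)) = Complex.ofReal from rfl] at h
    have h2 : ‖χ‖ ^ 2 = ∑ i, lam i * lam i * ‖Pv i‖ ^ 2 := by exact_mod_cast h
    rw [h2]
    exact Finset.sum_congr rfl fun i _ => by ring
  -- rows of φ
  set s : Fin m → EuclideanSpace ℂ (Fin n) := fun a => e (fun b => φ (a, b)) with hs
  have hsa : ∀ a, s a = ∑ i, (c i * u i a) • v i := by
    intro a
    refine (WithLp.equiv 2 _).injective (funext fun b => ?_)
    show φ (a, b) = (∑ i, (c i * u i a) • v i) b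
    rw [sum_smul_apply, hφdef]
  have hProj : ∀ a, ((W.orthogonalProjectionOnto (s a) : EuclideanSpace ℂ (Fin n)))
      = ∑ i, (c i * u i a) • Pv i := by
    intro a
    rw [hsa a, map_sum, Submodule.coe_sum]
    exact Finset.sum_congr rfl fun i _ => by rw [map_smul]; rfl
  have hχrow : ∀ a b, χ (a, b)
      = (W.orthogonalProjectionOnto (s a) : EuclideanSpace ℂ (Fin n)) b := by
    intro a b
    rw [hProj, sum_smul_apply, hχ, sum_tensor_apply]
  have hrW : ∀ a, r a ∈ W := fun a => Submodule.subset_span ⟨a, rfl⟩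
  have h0 : ⟪ψ, φ⟫ = ⟪ψ, χ⟫ := by
    have key : ∀ a, ⟪r a, s a - ((W.orthogonalProjectionOnto (s a) : EuclideanSpace ℂ (Fin n)))⟫ = 0 :=
      fun a => (Submodule.mem_orthogonal W _).1
        (W.sub_starProjection_mem_orthogonal (s a)) (r a) (hrW a)
    have hdiff : ⟪ψ, φ - χ⟫ = ∑ a, ⟪r a,
        s a - ((W.orthogonalProjectionOnto (s a) : EuclideanSpace ℂ (Fin n)))⟫ := by
      rw [PiLp.inner_apply, Fintype.sum_prod_type]
      apply Finset.sum_congr rfl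
      intro a _
      rw [PiLp.inner_apply]
      apply Finset.sum_congr rfl
      intro b _
      rw [RCLike.inner_apply, RCLike.inner_apply, PiLp.sub_apply, PiLp.sub_apply, hχrow a b]
      rfl
    have h2 : ⟪ψ, φ⟫ - ⟪ψ, χ⟫ = 0 := by
      rw [← inner_sub_right, hdiff]
      simp only [key, Finset.sum_const_zero]
    exact sub_eq_zero.mp h2
  -- the bound on ‖χ‖²
  have hPvle : ∀ i, ‖Pv i‖ ^ 2 ≤ 1 := by
    intro i
    have h := ContinuousLinearMap.le_opNorm (W.orthogonalProjectionOnto) (v i)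
    have h2 : ‖Pv i‖ ≤ 1 := by
      have h3 : ‖W.orthogonalProjectionOnto (v i)‖ ≤ 1 := by
        calc ‖W.orthogonalProjectionOnto (v i)‖ ≤ ‖W.orthogonalProjectionOnto‖ * ‖v i‖ := h
          _ ≤ 1 * 1 := by
              apply mul_le_mul (Submodule.orthogonalProjectionOnto_norm_le W) (le_of_eq (hv.1 i)) (norm_nonneg _)
              norm_num
          _ = 1 := by norm_num
      simpa [hPv] using h3
    calc ‖Pv i‖ ^ 2 ≤ 1 ^ 2 := by
          apply pow_le_pow_left₀ (norm_nonneg _) h2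
      _ = 1 := one_pow 2
  have hQle : ‖χ‖ ^ 2 ≤ ∑ i ∈ Finset.univ.filter (fun i : Fin N => (i : ℕ) < N'), lam i ^ 2 := by
    rw [hχnorm]
    apply combAux N N' hNN' lam (fun i => (hpos i).le) hmono (fun i => ‖Pv i‖ ^ 2)
      (fun i => sq_nonneg _) hPvle
    calc ∑ i, ‖Pv i‖ ^ 2 ≤ (Module.finrank ℂ W : ℝ) := besselAux v hv W
      _ ≤ (N' : ℝ) := by exact_mod_cast hdim
  -- real part bound
  have hre : RCLike.re ⟪ψ, φ⟫ ≤ ‖χ‖ := by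
    rw [h0]
    calc RCLike.re ⟪ψ, χ⟫ ≤ ‖⟪ψ, χ⟫‖ := RCLike.re_le_norm _
      _ ≤ ‖ψ‖ * ‖χ‖ := norm_inner_le_norm _ _
      _ = ‖χ‖ := by rw [hψ, one_mul]
  have hns : ‖ψ - φ‖ ^ 2 = 2 - 2 * RCLike.re ⟪ψ, φ⟫ := by
    rw [norm_sub_sq (𝕜 := ℂ), hψ, hφ]
    ring
  -- split the total sum
  have hsplit := Finset.sum_filter_add_sum_filter_not Finset.univ
    (fun i : Fin N => (i : ℕ) < N') (fun i => lam i ^ 2)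
  have hfilter : Finset.univ.filter (fun i : Fin N => ¬ (i : ℕ) < N')
      = Finset.univ.filter (fun i : Fin N => N' ≤ (i : ℕ)) := by
    apply Finset.filter_congr
    intro i _
    simp [Nat.not_lt]
  rw [hfilter, hsum1] at hsplit
  have hχ0 : (0 : ℝ) ≤ ‖χ‖ := norm_nonneg _
  nlinarith [sq_nonneg (1 - ‖χ‖)]
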